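/- Let a : ℕ → ℂ and let B ≥ 0 be a real number such that |∑_{n=N₁}^{N₂} a(n)| ≤ B for all integers 1 ≤ N₁ ≤ N₂. Let s ∈ ℂ with 0 < Re(s) ≤ 1 and let M ≥ 1 be an integer. Then the series ∑_{n ≥ M} a(n) n^{−s} converges and |∑_{n ≥ M} a(n) n^{−s}| ≤ B (|s| + 1) / (Re(s) · M^{Re(s)}). -/

import Mathlib

open Finset Filter intervalIntegral in
lemma diff_bound (s : ℂ) (hs : 0 < s.re) (n : ℕ) (hn : 1 ≤ n) :
    ‖((n : ℂ) + 1) ^ (-s) - (n : ℂ) ^ (-s)‖ ≤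
      (‖s‖ / s.re) * ((n : ℝ) ^ (-s.re) - ((n : ℝ) + 1) ^ (-s.re)) := by
  have hn0 : (0:ℝ) < (n:ℝ) := by exact_mod_cast hn
  have hnotmem : (0:ℝ) ∉ Set.uIcc (n:ℝ) ((n:ℝ)+1) := by
    rw [Set.uIcc_of_le (by linarith)]
    rintro ⟨h1, -⟩; linarith
  have hsne : s ≠ 0 := fun h => by simp [h] at hs
  have hcond : (-s - 1) ≠ -1 := by
    intro h; apply hsne; linear_combination -h
  have hI : (∫ t in (n:ℝ)..((n:ℝ)+1), (t : ℂ) ^ (-s - 1)) =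
      ((((n:ℝ)+1 : ℝ) : ℂ) ^ (-s) - ((n:ℝ) : ℂ) ^ (-s)) / (-s) := by
    rw [integral_cpow (Or.inr ⟨hcond, hnotmem⟩)]
    norm_num
  have hIr : (∫ t in (n:ℝ)..((n:ℝ)+1), (t : ℝ) ^ (-s.re - 1)) =
      (((n:ℝ)+1) ^ (-s.re) - (n:ℝ) ^ (-s.re)) / (-s.re) := by
    rw [integral_rpow (Or.inr ⟨by intro h; linarith [congrArg id h, hs], hnotmem⟩)]
    norm_num
  rw [eq_div_iff (neg_ne_zero.mpr hsne)] at hI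
  push_cast at hI
  calc ‖((n : ℂ) + 1) ^ (-s) - (n : ℂ) ^ (-s)‖
      = ‖(∫ t in (n:ℝ)..((n:ℝ)+1), (t : ℂ) ^ (-s - 1)) * (-s)‖ := by rw [hI]
    _ = ‖s‖ * ‖∫ t in (n:ℝ)..((n:ℝ)+1), (t : ℂ) ^ (-s - 1)‖ := by
        rw [norm_mul]; simp [mul_comm]
    _ ≤ ‖s‖ * ∫ t in (n:ℝ)..((n:ℝ)+1), ‖(t : ℂ) ^ (-s - 1)‖ := by
        refine mul_le_mul_of_nonneg_left ?_ (norm_nonneg _)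
        exact intervalIntegral.norm_integral_le_integral_norm (by linarith)
    _ = ‖s‖ * ∫ t in (n:ℝ)..((n:ℝ)+1), (t : ℝ) ^ (-s.re - 1) := by
        congr 1
        refine intervalIntegral.integral_congr (fun t ht => ?_)
        rw [Set.uIcc_of_le (by linarith)] at ht
        have ht0 : 0 < t := by linarith [ht.1]
        rw [Complex.norm_cpow_eq_rpow_re_of_pos ht0]
        norm_num [Complex.sub_re, Complex.neg_re]
    _ = (‖s‖ / s.re) * ((n : ℝ) ^ (-s.re) - ((n : ℝ) + 1) ^ (-s.re)) := by
        rw [hIr, div_neg, ← neg_div, neg_sub]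
        ring

open Finset in
lemma key_bound (a : ℕ → ℂ) (B : ℝ) (hB : 0 ≤ B)
    (h : ∀ N₁ N₂ : ℕ, 1 ≤ N₁ → N₁ ≤ N₂ → ‖∑ n ∈ Finset.Icc N₁ N₂, a n‖ ≤ B)
    (s : ℂ) (hs : 0 < s.re) (hs1 : s.re ≤ 1) (M : ℕ) (hM : 1 ≤ M) (N : ℕ) :
    ‖∑ n ∈ Finset.Ico M N, a n * (n : ℂ) ^ (-s)‖ ≤
      B * (‖s‖ + 1) / (s.re * (M : ℝ) ^ s.re) := by
  have hM0 : (0:ℝ) < (M:ℝ) := by exact_mod_cast hM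
  have hMσ : (0:ℝ) < (M:ℝ) ^ s.re := Real.rpow_pos_of_pos hM0 _
  have hRHS : 0 ≤ B * (‖s‖ + 1) / (s.re * (M : ℝ) ^ s.re) := by
    apply div_nonneg (mul_nonneg hB (by positivity)) (le_of_lt (by positivity))
  rcases le_or_gt N M with hNM | hNM
  · rw [Finset.Ico_eq_empty (by omega), Finset.sum_empty, norm_zero]
    exact hRHS
  set f : ℕ → ℂ := fun i => (i:ℂ)^(-s) with hf
  set g : ℕ → ℂ := fun i => if M ≤ i then a i else 0 with hg
  have hG0 : ∑ i ∈ range M, g i = 0 :=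
    Finset.sum_eq_zero fun i hi => if_neg (by simp only [mem_range] at hi; omega)
  have hGb : ∀ K, M < K → ‖∑ i ∈ range K, g i‖ ≤ B := by
    intro K hK
    have e1 : ∑ i ∈ range K, g i = ∑ i ∈ Ico M K, g i := by
      rw [range_eq_Ico, ← Finset.sum_Ico_consecutive _ (Nat.zero_le M) (le_of_lt hK),
        ← range_eq_Ico, hG0, zero_add]
    have e2 : ∑ i ∈ Ico M K, g i = ∑ i ∈ Icc M (K-1), a i := by
      rw [show K = (K-1)+1 by omega, Finset.Ico_add_one_right_eq_Icc]
      exact Finset.sum_congr rfl fun i hi => if_pos (Finset.mem_Icc.mp hi).1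
    rw [e1, e2]
    exact h M (K-1) hM (by omega)
  have habs : ∀ K, M ≤ K → ‖f K‖ ≤ (M:ℝ) ^ (-s.re) := by
    intro K hK
    have hK0 : (0:ℝ) < (K:ℝ) := by exact_mod_cast (by omega : 0 < K)
    have : ‖f K‖ = (K:ℝ) ^ (-s.re) := by
      show ‖((K:ℕ):ℂ) ^ (-s)‖ = _
      rw [show ((K:ℕ):ℂ) = (((K:ℕ):ℝ):ℂ) by push_cast; rfl,
        Complex.norm_cpow_eq_rpow_re_of_pos hK0, Complex.neg_re]
    rw [this]
    exact Real.rpow_le_rpow_of_nonpos hM0 (by exact_mod_cast hK) (by linarith)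
  -- summation by parts
  have hsum : ∑ n ∈ Finset.Ico M N, a n * (n : ℂ) ^ (-s) = ∑ i ∈ Ico M N, f i • g i := by
    refine Finset.sum_congr rfl fun i hi => ?_
    have : M ≤ i := (Finset.mem_Ico.mp hi).1
    simp [hf, hg, this, mul_comm]
  rw [hsum, Finset.sum_Ico_by_parts f g hNM, hG0, smul_zero, sub_zero]
  -- bound
  set σ := s.re
  set GG : ℕ → ℂ := fun K => ∑ i ∈ range K, g i with hGG
  have step1 : ‖f (N-1) • GG N - ∑ i ∈ Ico M (N-1), (f (i+1) - f i) • GG (i+1)‖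
      ≤ (M:ℝ)^(-σ) * B + ∑ i ∈ Ico M (N-1),
        (‖s‖ / σ) * (((i:ℝ))^(-σ) - ((i:ℝ)+1)^(-σ)) * B := by
    refine le_trans (norm_sub_le _ _) (add_le_add ?_ ?_)
    · rw [smul_eq_mul, norm_mul]
      exact mul_le_mul (habs (N-1) (by omega)) (hGb N hNM) (norm_nonneg _)
        (Real.rpow_nonneg (le_of_lt hM0) _)
    · refine le_trans (norm_sum_le _ _) (Finset.sum_le_sum fun i hi => ?_)
      have hiM : M ≤ i := (Finset.mem_Ico.mp hi).1
      rw [smul_eq_mul, norm_mul]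
      refine mul_le_mul ?_ (hGb (i+1) (by omega)) (norm_nonneg _) ?_
      · have := diff_bound s hs i (by omega)
        have hc : ((i+1:ℕ):ℂ) = (i:ℂ) + 1 := by push_cast; rfl
        show ‖((i+1:ℕ):ℂ)^(-s) - ((i:ℕ):ℂ)^(-s)‖ ≤ _
        rw [hc]
        exact this
      · have hd := diff_bound s hs i (by omega)
        have h0 : (0:ℝ) ≤ ‖((i:ℂ)+1)^(-s) - (i:ℂ)^(-s)‖ := norm_nonneg _
        exact le_trans h0 hd
  refine le_trans step1 ?_
  -- telescoping
  have htel : ∑ i ∈ Ico M (N-1), (((i:ℝ))^(-σ) - ((i:ℝ)+1)^(-σ))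
      = (M:ℝ)^(-σ) - ((N-1:ℕ):ℝ)^(-σ) := by
    have key : ∀ K, M ≤ K → ∑ i ∈ Ico M K, (((i:ℝ))^(-σ) - ((i:ℝ)+1)^(-σ))
        = (M:ℝ)^(-σ) - ((K:ℕ):ℝ)^(-σ) := by
      intro K
      induction K with
      | zero => intro hK; exact absurd hK (by omega)
      | succ n ih =>
        intro hK
        rcases Nat.lt_or_ge n M with hK' | hK'
        · have : M = n + 1 := by omega
          rw [this]
          simp
        · rw [Finset.sum_Ico_succ_top hK', ih hK']
          push_cast
          ring
    exact key (N-1) (by omega)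
  rw [← Finset.sum_mul, ← Finset.mul_sum, htel]
  -- final arithmetic
  have hσ0 : (0:ℝ) < σ := hs
  have hNσ : (0:ℝ) ≤ ((N-1:ℕ):ℝ)^(-σ) := Real.rpow_nonneg (by positivity) _
  have habsS : (0:ℝ) ≤ ‖s‖ := norm_nonneg _
  have hz : (M:ℝ)^(-σ) = ((M:ℝ)^σ)⁻¹ := Real.rpow_neg (le_of_lt hM0) σ
  have hσi : (1:ℝ) ≤ σ⁻¹ := by
    have h1 : σ⁻¹ * σ = 1 := inv_mul_cancel₀ (ne_of_gt hσ0)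
    nlinarith [mul_nonneg (le_of_lt (inv_pos.mpr hσ0)) (by linarith : (0:ℝ) ≤ 1 - σ)]
  have hzB : (0:ℝ) ≤ (M:ℝ)^(-σ) * B := mul_nonneg (Real.rpow_nonneg (le_of_lt hM0) _) hB
  calc (M:ℝ)^(-σ) * B + ‖s‖ / σ * ((M:ℝ)^(-σ) - ((N-1:ℕ):ℝ)^(-σ)) * B
      ≤ (M:ℝ)^(-σ) * B * σ⁻¹ + ‖s‖ / σ * ((M:ℝ)^(-σ)) * B := by
        refine add_le_add (le_mul_of_one_le_right hzB hσi) ?_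
        refine mul_le_mul_of_nonneg_right ?_ hB
        refine mul_le_mul_of_nonneg_left (by linarith) (by positivity)
    _ = B * (‖s‖ + 1) / (σ * (M:ℝ)^σ) := by
        rw [hz]
        field_simp
        ring

/-- **Tail bound via partial summation.**
Let `a : ℕ → ℂ` and `B ≥ 0` with `|∑_{n=N₁}^{N₂} a(n)| ≤ B` for all `1 ≤ N₁ ≤ N₂`.
Let `s ∈ ℂ` with `0 < Re(s) ≤ 1` and `M ≥ 1`. Then `∑_{n ≥ M} a(n) n^{−s}` converges
(as the limit of its partial sums) and its value `S` satisfies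
`|S| ≤ B (|s| + 1) / (Re(s) · M^{Re(s)})`. -/
theorem stmt11 (a : ℕ → ℂ) (B : ℝ) (hB : 0 ≤ B)
    (h : ∀ N₁ N₂ : ℕ, 1 ≤ N₁ → N₁ ≤ N₂ → ‖∑ n ∈ Finset.Icc N₁ N₂, a n‖ ≤ B)
    (s : ℂ) (hs : 0 < s.re) (hs1 : s.re ≤ 1) (M : ℕ) (hM : 1 ≤ M) :
    ∃ S : ℂ, Filter.Tendsto (fun N : ℕ => ∑ n ∈ Finset.Ico M N, a n * (n : ℂ) ^ (-s))
        Filter.atTop (nhds S) ∧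
      ‖S‖ ≤ B * (‖s‖ + 1) / (s.re * (M : ℝ) ^ s.re) := by
  set S : ℕ → ℂ := fun N => ∑ n ∈ Finset.Ico M N, a n * (n : ℂ) ^ (-s) with hSd
  have htend : Filter.Tendsto (fun K : ℕ => B * (‖s‖ + 1) / (s.re * (K:ℝ)^s.re))
      Filter.atTop (nhds 0) := by
    apply Filter.Tendsto.div_atTop tendsto_const_nhds
    apply Filter.Tendsto.const_mul_atTop hs
    exact (tendsto_rpow_atTop hs).comp tendsto_natCast_atTop_atTop
  have hcauchy : CauchySeq S := by
    rw [Metric.cauchySeq_iff']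
    intro ε hε
    have hev := htend.eventually (gt_mem_nhds hε)
    rw [Filter.eventually_atTop] at hev
    obtain ⟨K, hK⟩ := hev
    refine ⟨max K M, fun n hn => ?_⟩
    have hM1 : 1 ≤ max K M := le_trans hM (le_max_right _ _)
    have hsplit : S n - S (max K M) = ∑ k ∈ Finset.Ico (max K M) n, a k * (k:ℂ)^(-s) := by
      rw [hSd]
      simp only
      rw [← Finset.sum_Ico_consecutive (fun k => a k * (k:ℂ)^(-s)) (le_max_right K M) hn]
      ring
    rw [dist_eq_norm, hsplit]
    calc ‖∑ k ∈ Finset.Ico (max K M) n, a k * (k:ℂ)^(-s)‖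
        ≤ B * (‖s‖ + 1) / (s.re * ((max K M : ℕ):ℝ) ^ s.re) :=
          key_bound a B hB h s hs hs1 (max K M) hM1 n
      _ < ε := hK (max K M) (le_max_left _ _)
  obtain ⟨Sl, hSl⟩ := cauchySeq_tendsto_of_complete hcauchy
  refine ⟨Sl, hSl, ?_⟩
  have habs : Filter.Tendsto (fun N => ‖S N‖) Filter.atTop
      (nhds (‖Sl‖)) := (continuous_norm.tendsto _).comp hSl
  exact le_of_tendsto habs
    (Filter.Eventually.of_forall fun N => key_bound a B hB h s hs hs1 M hM N)
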